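/- Let h(t) = t²·ln t − (t² − 1). Then h has a unique zero t_root in the open interval (1, ∞), and 2.21 < t_root < 2.22. Moreover, for any S > 0, N_1, …, N_K > 0 and 1 ≤ q ≤ K − 1, the unique root t_q in (1,∞) of g(t) = t²·ln t − (t² − 1) + ((t·∑_{k=1}^q N_k + N_{q+1})/(S + ∑_{k=1}^K N_k))·(t − 1) satisfies t_q < t_root. -/

import Mathlib

noncomputable def FF (t : ℝ) : ℝ := Real.log t - 1 + (t^2)⁻¹

lemma h_eq_FF (t : ℝ) (ht : 0 < t) :
    t^2 * Real.log t - (t^2 - 1) = t^2 * FF t := by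
  unfold FF; field_simp; ring

lemma FF_hasDeriv (t : ℝ) (ht : t ≠ 0) :
    HasDerivAt FF (1/t - 2/t^3) t := by
  have h1 : HasDerivAt Real.log t⁻¹ t := Real.hasDerivAt_log ht
  have h2 : HasDerivAt (fun t : ℝ => t^2) (2*t^1) t := by simpa using hasDerivAt_pow 2 t
  have h3 : HasDerivAt (fun t : ℝ => (t^2)⁻¹) (-(2*t^1) / (t^2)^2) t :=
    h2.inv (pow_ne_zero 2 ht)
  have := (h1.sub_const 1).add h3
  refine this.congr_deriv ?_
  field_simp
  ring

lemma FF_cont (s : Set ℝ) (hs : ∀ x ∈ s, x ≠ 0) : ContinuousOn FF s :=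
  fun x hx => ((FF_hasDeriv x (hs x hx)).continuousAt).continuousWithinAt

lemma sqrt2_facts : 1 < Real.sqrt 2 ∧ Real.sqrt 2 < 3/2 := by
  have h1 : Real.sqrt 2 ^ 2 = 2 := Real.sq_sqrt (by norm_num)
  have h2 : 0 ≤ Real.sqrt 2 := Real.sqrt_nonneg 2
  constructor <;> nlinarith

lemma FF_mono : StrictMonoOn FF (Set.Ici (Real.sqrt 2)) := by
  have h1 := sqrt2_facts.1
  apply strictMonoOn_of_deriv_pos (convex_Ici _)
    (FF_cont _ (fun x hx => by have := hx; simp only [Set.mem_Ici] at this; nlinarith))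
  intro x hx
  rw [interior_Ici] at hx
  have hx2 : 2 < x^2 := by
    have := Real.sq_sqrt (show (0:ℝ) ≤ 2 by norm_num)
    nlinarith [Set.mem_Ioi.mp hx, Real.sqrt_nonneg 2]
  have hx0 : 0 < x := by nlinarith [Set.mem_Ioi.mp hx]
  rw [(FF_hasDeriv x (ne_of_gt hx0)).deriv]
  have : 1/x - 2/x^3 = (x^2 - 2)/x^3 := by field_simp
  rw [this]
  exact div_pos (by linarith) (by positivity)

lemma FF_anti : StrictAntiOn FF (Set.Icc 1 (Real.sqrt 2)) := by
  have h1 := sqrt2_facts.1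
  apply strictAntiOn_of_deriv_neg (convex_Icc _ _)
    (FF_cont _ (fun x hx => by have := hx.1; nlinarith))
  intro x hx
  rw [interior_Icc] at hx
  obtain ⟨ha, hb⟩ := hx
  have hx2 : x^2 < 2 := by
    have := Real.sq_sqrt (show (0:ℝ) ≤ 2 by norm_num)
    nlinarith
  have hx0 : 0 < x := by linarith
  rw [(FF_hasDeriv x (ne_of_gt hx0)).deriv]
  have : 1/x - 2/x^3 = (x^2 - 2)/x^3 := by field_simp
  rw [this]
  apply div_neg_of_neg_of_pos (by linarith) (by positivity)

lemma FF_one : FF 1 = 0 := by unfold FF; simp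

lemma FF_neg_small (t : ℝ) (h1 : 1 < t) (h2 : t ≤ 3/2) : FF t < 0 := by
  obtain ⟨s1, s2⟩ := sqrt2_facts
  by_cases hc : t ≤ Real.sqrt 2
  · have := FF_anti (Set.mem_Icc.mpr ⟨le_refl 1, by linarith⟩)
      (Set.mem_Icc.mpr ⟨by linarith, hc⟩) h1
    rw [FF_one] at this; linarith
  · push_neg at hc
    have h32 : FF (3/2) < 0 := by
      have := Real.log_le_sub_one_of_pos (show (0:ℝ) < 3/2 by norm_num)
      unfold FF; norm_num at this ⊢; linarith
    rcases lt_or_eq_of_le h2 with h | h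
    · have := FF_mono.monotoneOn (Set.mem_Ici.mpr hc.le)
        (Set.mem_Ici.mpr s2.le) h2
      linarith
    · rw [h]; exact h32

lemma log_ge_one_sub_inv (x : ℝ) (hx : 0 < x) : 1 - 1/x ≤ Real.log x := by
  have h := Real.log_le_sub_one_of_pos (show 0 < x⁻¹ by positivity)
  rw [Real.log_inv] at h
  have : (1:ℝ)/x = x⁻¹ := one_div x
  linarith [this ▸ h]

lemma log221_lt : Real.log 2.21 < 0.7951 := by
  have e1 : Real.log ((2.21:ℝ)^7) = 7 * Real.log 2.21 := by
    rw [Real.log_pow]; norm_num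
  have e2 : (2.21:ℝ)^7 = 256 * ((2.21:ℝ)^7 / 256) := by ring
  have e3 : Real.log ((2.21:ℝ)^7) = 8 * Real.log 2 + Real.log ((2.21:ℝ)^7 / 256) := by
    rw [e2, Real.log_mul (by norm_num) (by positivity)]
    congr 1
    · rw [show (256:ℝ) = 2^8 by norm_num, Real.log_pow]; norm_num
    · rw [← e2]
  have e4 : Real.log ((2.21:ℝ)^7 / 256) ≤ (2.21:ℝ)^7 / 256 - 1 :=
    Real.log_le_sub_one_of_pos (by positivity)
  have hl2 := Real.log_two_lt_d9
  have hval : (2.21:ℝ)^7 / 256 - 1 < 0.005806 := by norm_num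
  nlinarith

lemma log222_gt : 0.7972 < Real.log 2.22 := by
  have e1 : Real.log ((2.22:ℝ)^7) = 7 * Real.log 2.22 := by
    rw [Real.log_pow]; norm_num
  have e2 : (2.22:ℝ)^7 = 256 * ((2.22:ℝ)^7 / 256) := by ring
  have e3 : Real.log ((2.22:ℝ)^7) = 8 * Real.log 2 + Real.log ((2.22:ℝ)^7 / 256) := by
    rw [e2, Real.log_mul (by norm_num) (by positivity)]
    congr 1
    · rw [show (256:ℝ) = 2^8 by norm_num, Real.log_pow]; norm_num
    · rw [← e2]
  have e4 : 1 - 1/((2.22:ℝ)^7 / 256) ≤ Real.log ((2.22:ℝ)^7 / 256) := by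
    apply log_ge_one_sub_inv _ (by positivity)
  have hl2 := Real.log_two_gt_d9
  have hval : (0.03667:ℝ) < 1 - 1/((2.22:ℝ)^7 / 256) := by norm_num
  nlinarith

lemma FF221_neg : FF 2.21 < 0 := by
  have := log221_lt
  unfold FF
  have h : ((2.21:ℝ)^2)⁻¹ < 0.20475 := by norm_num
  linarith

lemma FF222_pos : 0 < FF 2.22 := by
  have := log222_gt
  unfold FF
  have h : (0.2029:ℝ) < ((2.22:ℝ)^2)⁻¹ := by norm_num
  linarith

/-- The function h(t) = t² ln t − (t² − 1) has a unique zero t_root in (1, ∞), with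
2.21 < t_root < 2.22; moreover every root t_q in (1, ∞) of
g(t) = h(t) + ((t ∑_{k=1}^q N_k + N_{q+1})/(S + ∑_{k=1}^K N_k))(t − 1)
satisfies t_q < t_root. Group sizes are indexed 0, …, K−1. -/
theorem iccp_threshold_bound :
    ∃ troot : ℝ,
      (1 < troot ∧
        troot ^ 2 * Real.log troot - (troot ^ 2 - 1) = 0 ∧
        ∀ t : ℝ, 1 < t → t ^ 2 * Real.log t - (t ^ 2 - 1) = 0 → t = troot) ∧
      (2.21 < troot ∧ troot < 2.22) ∧
      ∀ (S : ℝ) (K : ℕ) (N : ℕ → ℝ) (q : ℕ),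
        0 < S → (∀ k < K, 0 < N k) → 1 ≤ q → q ≤ K - 1 →
        ∀ tq : ℝ, 1 < tq →
          (tq ^ 2 * Real.log tq - (tq ^ 2 - 1) +
            ((tq * ∑ k ∈ Finset.range q, N k + N q) /
              (S + ∑ k ∈ Finset.range K, N k)) * (tq - 1) = 0) →
          tq < troot := by
  obtain ⟨s1, s2⟩ := sqrt2_facts
  -- existence of troot via IVT applied to FF
  have hivt := intermediate_value_Ioo (show (2.21:ℝ) ≤ 2.22 by norm_num)
    (FF_cont (Set.Icc 2.21 2.22) (fun x hx => by have := hx.1; norm_num; linarith))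
  have h0mem : (0:ℝ) ∈ Set.Ioo (FF 2.21) (FF 2.22) := ⟨FF221_neg, FF222_pos⟩
  obtain ⟨troot, htmem, htzero⟩ := hivt h0mem
  obtain ⟨ht1, ht2⟩ := htmem
  have htroot_pos : (0:ℝ) < troot := by linarith
  have htroot_gt1 : (1:ℝ) < troot := by linarith
  have htroot_sqrt : Real.sqrt 2 ≤ troot := by linarith
  refine ⟨troot, ⟨htroot_gt1, ?_, ?_⟩, ⟨ht1, ht2⟩, ?_⟩
  · rw [h_eq_FF troot htroot_pos, htzero, mul_zero]
  · -- uniqueness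
    intro t ht hteq
    have htpos : (0:ℝ) < t := by linarith
    have hFFt : FF t = 0 := by
      rw [h_eq_FF t htpos] at hteq
      have ht2p : (0:ℝ) < t^2 := by positivity
      exact (mul_eq_zero.mp hteq).resolve_left (ne_of_gt ht2p)
    by_cases hc : t ≤ 3/2
    · exact absurd hFFt (ne_of_lt (FF_neg_small t ht hc))
    · push_neg at hc
      have htsqrt : Real.sqrt 2 ≤ t := by linarith
      exact FF_mono.injOn (Set.mem_Ici.mpr htsqrt) (Set.mem_Ici.mpr htroot_sqrt)
        (by rw [hFFt, htzero])
  · -- root comparison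
    intro S K N q hS hN hq1 hqK tq htq hgq
    have hqK' : q < K := by omega
    have hSq : 0 < ∑ k ∈ Finset.range q, N k := by
      apply Finset.sum_pos
      · intro k hk
        exact hN k (by simp only [Finset.mem_range] at hk; omega)
      · exact ⟨0, Finset.mem_range.mpr (by omega)⟩
    have hSK : 0 < ∑ k ∈ Finset.range K, N k := by
      apply Finset.sum_pos
      · intro k hk
        exact hN k (Finset.mem_range.mp hk)
      · exact ⟨0, Finset.mem_range.mpr (by omega)⟩
    have hNq : 0 < N q := hN q hqK'
    have hnum : 0 < tq * ∑ k ∈ Finset.range q, N k + N q := by nlinarith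
    have hden : 0 < S + ∑ k ∈ Finset.range K, N k := by linarith
    have hextra : 0 < ((tq * ∑ k ∈ Finset.range q, N k + N q) /
        (S + ∑ k ∈ Finset.range K, N k)) * (tq - 1) :=
      mul_pos (div_pos hnum hden) (by linarith)
    have hneg : tq ^ 2 * Real.log tq - (tq ^ 2 - 1) < 0 := by linarith
    have htqpos : (0:ℝ) < tq := by linarith
    rw [h_eq_FF tq htqpos] at hneg
    have hFFneg : FF tq < 0 := by nlinarith [pow_pos htqpos 2]
    by_cases hc : tq ≤ 3/2
    · linarith
    · push_neg at hc
      by_contra hcon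
      push_neg at hcon
      have := FF_mono.monotoneOn (Set.mem_Ici.mpr htroot_sqrt)
        (Set.mem_Ici.mpr (show Real.sqrt 2 ≤ tq by linarith)) hcon
      rw [htzero] at this
      linarith
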